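/- For all trace-free A, P, Q ∈ SL(2,ℂ): tr(A·(PQP⁻¹)) = −tr(AP)·tr(PQ) − tr(AQ). Equivalently, setting x(M,N) := −tr(MN), one has x(A, PQP⁻¹) = x(P,Q)·x(A,P) − x(A,Q), the fundamental relation (F2). -/
import Mathlib


open Matrix

/-- `SL(2,ℂ)`. -/
abbrev SL2C := Matrix.SpecialLinearGroup (Fin 2) ℂ

/-- The trace of an element of `SL(2,ℂ)`. -/
noncomputable def trSL2 (A : SL2C) : ℂ := Matrix.trace (A : Matrix (Fin 2) (Fin 2) ℂ)

/-- The fundamental relation (F2): for trace-free `A, P, Q ∈ SL(2,ℂ)`,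
`tr(A·(PQP⁻¹)) = −tr(AP)·tr(PQ) − tr(AQ)`. -/
theorem stmt5 (A P Q : SL2C)
    (hA : trSL2 A = 0) (hP : trSL2 P = 0) (hQ : trSL2 Q = 0) :
    trSL2 (A * (P * Q * P⁻¹)) = -(trSL2 (A * P) * trSL2 (P * Q)) - trSL2 (A * Q) := by
  have hAd := A.2
  have hPd := P.2
  have hQd := Q.2
  simp only [Matrix.det_fin_two] at hAd hPd hQd
  simp only [trSL2, Matrix.SpecialLinearGroup.coe_mul, Matrix.SpecialLinearGroup.coe_inv,
    Matrix.adjugate_fin_two, Matrix.trace_fin_two, Matrix.mul_apply, Fin.sum_univ_succ,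
    Fin.sum_univ_zero, Fin.succ_zero_eq_one, Matrix.of_apply, Matrix.cons_val', Matrix.cons_val_zero,
    Matrix.cons_val_one, Matrix.head_cons, Matrix.head_fin_const, Matrix.empty_val',
    Matrix.cons_val_fin_one] at *
  ring_nf
  ring_nf at hA hP hQ hAd hPd hQd
  linear_combination (norm := ring_nf)  ((P 0 0 : ℂ)^2*(Q 0 0 : ℂ) + (P 0 0 : ℂ)*(P 0 1 : ℂ)*(Q 1 0 : ℂ) + (P 0 0 : ℂ)*(P 1 1 : ℂ)*(Q 0 0 : ℂ) + (P 0 0 : ℂ)*(P 1 1 : ℂ)*(Q 1 1 : ℂ) - (P 0 1 : ℂ)*(P 1 0 : ℂ)*(Q 1 1 : ℂ) + (P 0 1 : ℂ)*(P 1 1 : ℂ)*(Q 1 0 : ℂ) + (Q 0 0 : ℂ)) * hA + ((A 0 1 : ℂ)*(P 1 0 : ℂ)*(Q 0 0 : ℂ) + (A 1 0 : ℂ)*(P 0 0 : ℂ)*(Q 0 1 : ℂ) + (A 1 0 : ℂ)*(P 0 1 : ℂ)*(Q 1 1 : ℂ) - (A 1 0 : ℂ)*(P 1 1 : ℂ)*(Q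 0 1 : ℂ) - (A 1 1 : ℂ)*(P 0 0 : ℂ)*(Q 0 0 : ℂ) - (A 1 1 : ℂ)*(P 0 1 : ℂ)*(Q 1 0 : ℂ) + (A 1 1 : ℂ)*(P 1 0 : ℂ)*(Q 0 1 : ℂ) + (A 1 1 : ℂ)*(P 1 1 : ℂ)*(Q 0 0 : ℂ) + ((A 0 1 : ℂ)*(Q 1 0 : ℂ) + (A 1 0 : ℂ)*(Q 0 1 : ℂ) + 2*(A 1 1 : ℂ)*(Q 1 1 : ℂ))*(P 1 1 : ℂ)) * hP + (-((A 1 1 : ℂ)*(P 0 1 : ℂ)*(P 1 0 : ℂ)) - (A 1 1 : ℂ)*(P 1 1 : ℂ)^2 - (A 1 1 : ℂ)) * hQ - ((A 0 1 : ℂ)*(Q 1 0 : ℂ) + (A 1 0 : ℂ)*(Q 0 1 : ℂ) + 2*(A 1 1 : ℂ)*(Q 1 1 : ℂ)) * hPd
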